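/- Let r ≥ 1 and let A_1, …, A_r : ℤ → [0,∞) be summable functions supported on ℕ with ‖A_i‖₁ = 1/2 for each i. Let a_1, …, a_r be non-negative integers and let a be an integer with a ≥ a_1 + ⋯ + a_r. Then sup_{x ≥ a} (A_1∗⋯∗A_r)(x) ≤ 2^{1−r}·∑_{i=1}^r sup_{x ≥ a_i} A_i(x). -/
import Mathlib


/-- Discrete convolution of functions on `ℤ`. -/
noncomputable def zconv (A B : ℤ → ℝ) : ℤ → ℝ := fun n => ∑' p : ℤ, A p * B (n - p)

/-- Iterated discrete convolution `A 0 ∗ A 1 ∗ ⋯ ∗ A m`. -/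
noncomputable def iConv : (m : ℕ) → (Fin (m + 1) → ℤ → ℝ) → ℤ → ℝ
  | 0, A => A 0
  | m + 1, A => zconv (A 0) (iConv m (fun i => A i.succ))

section aux

variable {A B : ℤ → ℝ}

lemma tsum_sub_left (B : ℤ → ℝ) (x : ℤ) : ∑' p : ℤ, B (x - p) = ∑' p : ℤ, B p :=
  (Equiv.subLeft x).tsum_eq B

lemma summable_sub_left (hB : Summable B) (x : ℤ) : Summable fun p : ℤ => B (x - p) :=
  ((Equiv.subLeft x).summable_iff (f := B)).2 hB

lemma ennF_total (hAnn : ∀ k, 0 ≤ A k) (hBnn : ∀ k, 0 ≤ B k)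
    (hAs : Summable A) (hBs : Summable B) :
    ∑' (n : ℤ) (p : ℤ), ENNReal.ofReal (A p * B (n - p)) =
      ENNReal.ofReal (∑' k, A k) * ENNReal.ofReal (∑' k, B k) := by
  rw [ENNReal.tsum_comm]
  have h1 : ∀ p : ℤ, ∑' n : ℤ, ENNReal.ofReal (A p * B (n - p)) =
      ENNReal.ofReal (A p) * ENNReal.ofReal (∑' k, B k) := by
    intro p
    have : ∀ n : ℤ, ENNReal.ofReal (A p * B (n - p)) =
        ENNReal.ofReal (A p) * ENNReal.ofReal (B (n - p)) := fun n =>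
      ENNReal.ofReal_mul (hAnn p)
    simp_rw [this, ENNReal.tsum_mul_left]
    congr 1
    rw [ENNReal.ofReal_tsum_of_nonneg hBnn hBs]
    exact (Equiv.subRight p).tsum_eq fun k => ENNReal.ofReal (B k)
  simp_rw [h1, ENNReal.tsum_mul_right]
  rw [ENNReal.ofReal_tsum_of_nonneg hAnn hAs]

lemma zconv_summable_inner (hAnn : ∀ k, 0 ≤ A k) (hBnn : ∀ k, 0 ≤ B k)
    (hAs : Summable A) (hBs : Summable B) (n : ℤ) :
    Summable fun p : ℤ => A p * B (n - p) := by
  have hne : (∑' p : ℤ, ENNReal.ofReal (A p * B (n - p))) ≠ ⊤ := by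
    have hle : (∑' p : ℤ, ENNReal.ofReal (A p * B (n - p))) ≤
        ∑' (n : ℤ) (p : ℤ), ENNReal.ofReal (A p * B (n - p)) :=
      ENNReal.le_tsum n
    rw [ennF_total hAnn hBnn hAs hBs] at hle
    exact ne_top_of_le_ne_top (ENNReal.mul_ne_top ENNReal.ofReal_ne_top ENNReal.ofReal_ne_top) hle
  have := ENNReal.summable_toReal hne
  refine this.congr fun p => ?_
  exact ENNReal.toReal_ofReal (mul_nonneg (hAnn p) (hBnn _))

lemma zconv_nonneg (hAnn : ∀ k, 0 ≤ A k) (hBnn : ∀ k, 0 ≤ B k) (n : ℤ) :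
    0 ≤ zconv A B n :=
  tsum_nonneg fun p => mul_nonneg (hAnn p) (hBnn _)

lemma zconv_eq_toReal (hAnn : ∀ k, 0 ≤ A k) (hBnn : ∀ k, 0 ≤ B k)
    (hAs : Summable A) (hBs : Summable B) (n : ℤ) :
    zconv A B n = (∑' p : ℤ, ENNReal.ofReal (A p * B (n - p))).toReal := by
  rw [← ENNReal.ofReal_tsum_of_nonneg (fun p => mul_nonneg (hAnn p) (hBnn _))
    (zconv_summable_inner hAnn hBnn hAs hBs n)]
  rw [ENNReal.toReal_ofReal (tsum_nonneg fun p => mul_nonneg (hAnn p) (hBnn _))]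
  rfl

lemma zconv_summable (hAnn : ∀ k, 0 ≤ A k) (hBnn : ∀ k, 0 ≤ B k)
    (hAs : Summable A) (hBs : Summable B) : Summable (zconv A B) := by
  have hne : (∑' (n : ℤ) (p : ℤ), ENNReal.ofReal (A p * B (n - p))) ≠ ⊤ := by
    rw [ennF_total hAnn hBnn hAs hBs]
    exact ENNReal.mul_ne_top ENNReal.ofReal_ne_top ENNReal.ofReal_ne_top
  have := ENNReal.summable_toReal hne
  exact this.congr fun n => (zconv_eq_toReal hAnn hBnn hAs hBs n).symm

lemma zconv_tsum (hAnn : ∀ k, 0 ≤ A k) (hBnn : ∀ k, 0 ≤ B k)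
    (hAs : Summable A) (hBs : Summable B) :
    ∑' n : ℤ, zconv A B n = (∑' k, A k) * (∑' k, B k) := by
  have hfin : ∀ n : ℤ, (∑' p : ℤ, ENNReal.ofReal (A p * B (n - p))) ≠ ⊤ := by
    intro n
    have hle : (∑' p : ℤ, ENNReal.ofReal (A p * B (n - p))) ≤
        ∑' (n : ℤ) (p : ℤ), ENNReal.ofReal (A p * B (n - p)) := ENNReal.le_tsum n
    rw [ennF_total hAnn hBnn hAs hBs] at hle
    exact ne_top_of_le_ne_top (ENNReal.mul_ne_top ENNReal.ofReal_ne_top ENNReal.ofReal_ne_top) hle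
  calc ∑' n : ℤ, zconv A B n
      = ∑' n : ℤ, (∑' p : ℤ, ENNReal.ofReal (A p * B (n - p))).toReal := by
        exact tsum_congr fun n => zconv_eq_toReal hAnn hBnn hAs hBs n
    _ = (∑' (n : ℤ) (p : ℤ), ENNReal.ofReal (A p * B (n - p))).toReal :=
        (ENNReal.tsum_toReal_eq hfin).symm
    _ = (∑' k, A k) * (∑' k, B k) := by
        rw [ennF_total hAnn hBnn hAs hBs, ENNReal.toReal_mul,
          ENNReal.toReal_ofReal (tsum_nonneg hAnn), ENNReal.toReal_ofReal (tsum_nonneg hBnn)]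

/-- The key tail bound for a single convolution. -/
lemma zconv_tail (hAnn : ∀ k, 0 ≤ A k) (hBnn : ∀ k, 0 ≤ B k)
    (hAs : Summable A) (hBs : Summable B)
    (c d x : ℤ) (hx : c + d ≤ x) (MA MB : ℝ) (hMA0 : 0 ≤ MA) (hMB0 : 0 ≤ MB)
    (hMA : ∀ y, c ≤ y → A y ≤ MA) (hMB : ∀ y, d ≤ y → B y ≤ MB) :
    zconv A B x ≤ (∑' k, A k) * MB + MA * (∑' k, B k) := by
  have hBx : Summable fun p : ℤ => B (x - p) := summable_sub_left hBs x
  have hsum_h : Summable fun p : ℤ => A p * MB + MA * B (x - p) :=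
    (hAs.mul_right MB).add (hBx.mul_left MA)
  have hterm : ∀ p : ℤ, A p * B (x - p) ≤ A p * MB + MA * B (x - p) := by
    intro p
    rcases lt_or_ge p c with hp | hp
    · have hxd : d ≤ x - p := by omega
      have : A p * B (x - p) ≤ A p * MB :=
        mul_le_mul_of_nonneg_left (hMB _ hxd) (hAnn p)
      nlinarith [mul_nonneg hMA0 (hBnn (x - p))]
    · have : A p * B (x - p) ≤ MA * B (x - p) :=
        mul_le_mul_of_nonneg_right (hMA _ hp) (hBnn _)
      nlinarith [mul_nonneg (hAnn p) hMB0]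
  have hLs : Summable fun p : ℤ => A p * B (x - p) :=
    zconv_summable_inner hAnn hBnn hAs hBs x
  calc zconv A B x ≤ ∑' p : ℤ, (A p * MB + MA * B (x - p)) :=
        Summable.tsum_le_tsum hterm hLs hsum_h
    _ = (∑' k, A k) * MB + MA * (∑' k, B k) := by
        rw [Summable.tsum_add (hAs.mul_right MB) (hBx.mul_left MA), tsum_mul_right,
          tsum_mul_left, tsum_sub_left]

lemma iConv_facts : ∀ (m : ℕ) (A : Fin (m + 1) → ℤ → ℝ),
    (∀ i k, 0 ≤ A i k) → (∀ i, Summable (A i)) →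
    (∀ k, 0 ≤ iConv m A k) ∧ Summable (iConv m A) ∧
      ∑' k, iConv m A k = ∏ i, ∑' k, A i k := by
  intro m
  induction m with
  | zero =>
    intro A hnn hs
    refine ⟨hnn 0, hs 0, ?_⟩
    simp [iConv, Fin.prod_univ_one]
  | succ m ih =>
    intro A hnn hs
    obtain ⟨hBnn, hBs, hBt⟩ := ih (fun i => A i.succ) (fun i => hnn i.succ) (fun i => hs i.succ)
    refine ⟨zconv_nonneg (hnn 0) hBnn, zconv_summable (hnn 0) hBnn (hs 0) hBs, ?_⟩
    show ∑' k, zconv (A 0) (iConv m fun i => A i.succ) k = _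
    rw [zconv_tsum (hnn 0) hBnn (hs 0) hBs, hBt]
    exact (Fin.prod_univ_succ fun i => ∑' k, A i k).symm

end aux

lemma pow_half (m : ℕ) : (2 : ℝ) ^ (1 - ((m : ℤ) + 1)) = (1 / 2 : ℝ) ^ m := by
  have h : 1 - ((m : ℤ) + 1) = -(m : ℤ) := by ring
  rw [h, zpow_neg, zpow_natCast, one_div, inv_pow]

lemma conv_tail_aux : ∀ (m : ℕ) (A : Fin (m + 1) → ℤ → ℝ),
    (∀ i k, 0 ≤ A i k) → (∀ i, Summable (A i)) →
    (∀ i, ∑' k : ℤ, A i k = 1 / 2) →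
    ∀ (a : Fin (m + 1) → ℤ), ∀ x : ℤ, (∑ i, a i) ≤ x →
      iConv m A x ≤ (1 / 2 : ℝ) ^ m * ∑ i, ⨆ y : Set.Ici (a i), A i y := by
  intro m
  induction m with
  | zero =>
    intro A hnn hs hone a x hx
    have hx0 : a 0 ≤ x := by simpa [Fin.sum_univ_one] using hx
    have hbdd : BddAbove (Set.range fun y : Set.Ici (a 0) => A 0 y) := by
      refine ⟨∑' k, A 0 k, ?_⟩
      rintro _ ⟨y, rfl⟩
      exact Summable.le_tsum (hs 0) _ fun j _ => hnn 0 j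
    have : A 0 x ≤ ⨆ y : Set.Ici (a 0), A 0 y := le_ciSup hbdd ⟨x, hx0⟩
    simpa [iConv, Fin.sum_univ_one] using this
  | succ m ih =>
    intro A hnn hs hone a x hx
    set B := iConv m (fun i => A i.succ) with hBdef
    obtain ⟨hBnn, hBs, hBt⟩ := iConv_facts m (fun i => A i.succ)
      (fun i => hnn i.succ) (fun i => hs i.succ)
    have hBt' : ∑' k, B k = (1 / 2 : ℝ) ^ (m + 1) := by
      rw [hBt]
      simp [hone]
    -- sup bounds
    have hbdd : ∀ i : Fin (m + 2), BddAbove (Set.range fun y : Set.Ici (a i) => A i y) := by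
      intro i
      refine ⟨∑' k, A i k, ?_⟩
      rintro _ ⟨y, rfl⟩
      exact Summable.le_tsum (hs i) _ fun j _ => hnn i j
    set M : Fin (m + 2) → ℝ := fun i => ⨆ y : Set.Ici (a i), A i y with hM
    have hMle : ∀ i : Fin (m + 2), ∀ y, a i ≤ y → A i y ≤ M i := fun i y hy =>
      le_ciSup (hbdd i) ⟨y, hy⟩
    have hM0 : ∀ i, 0 ≤ M i := fun i =>
      (hnn i (a i)).trans (hMle i (a i) le_rfl)
    -- IH gives bound on B on the tail
    set S : ℝ := ∑ i : Fin (m + 1), ⨆ y : Set.Ici (a i.succ), A i.succ y with hS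
    have hS0 : 0 ≤ S := Finset.sum_nonneg fun i _ => hM0 i.succ
    have hBtail : ∀ y : ℤ, (∑ i : Fin (m + 1), a i.succ) ≤ y →
        B y ≤ (1 / 2 : ℝ) ^ m * S :=
      fun y hy => ih (fun i => A i.succ) (fun i => hnn i.succ) (fun i => hs i.succ)
        (fun i => hone i.succ) (fun i => a i.succ) y hy
    have hxsplit : a 0 + (∑ i : Fin (m + 1), a i.succ) ≤ x := by
      rw [← Fin.sum_univ_succ]; exact hx
    have key := zconv_tail (hnn 0) hBnn (hs 0) hBs (a 0) (∑ i : Fin (m + 1), a i.succ) x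
      hxsplit (M 0) ((1 / 2 : ℝ) ^ m * S) (hM0 0)
      (mul_nonneg (by positivity) hS0) (hMle 0) hBtail
    rw [hone 0, hBt'] at key
    have : iConv (m + 1) A x = zconv (A 0) B x := rfl
    rw [this]
    refine key.trans (le_of_eq ?_)
    rw [Fin.sum_univ_succ]
    show (1:ℝ)/2 * ((1 / 2 : ℝ) ^ m * S) + M 0 * (1 / 2 : ℝ) ^ (m + 1)
      = (1 / 2 : ℝ) ^ (m + 1) * (M 0 + S)
    ring

theorem conv_tail_bound (m : ℕ) (A : Fin (m + 1) → ℤ → ℝ)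
    (hnonneg : ∀ i k, 0 ≤ A i k)
    (hsupp : ∀ i, ∀ k < 0, A i k = 0)
    (hsum : ∀ i, Summable (A i))
    (hone : ∀ i, ∑' k : ℤ, A i k = 1 / 2)
    (a : Fin (m + 1) → ℤ) (ha : ∀ i, 0 ≤ a i)
    (a₀ : ℤ) (ha₀ : ∑ i, a i ≤ a₀) :
    ∀ x : ℤ, a₀ ≤ x →
      iConv m A x ≤
        (2 : ℝ) ^ (1 - ((m : ℤ) + 1)) * ∑ i, ⨆ y : Set.Ici (a i), A i y := by
  intro x hx
  rw [pow_half]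
  exact conv_tail_aux m A hnonneg hsum hone a x (ha₀.trans hx)
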